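/- arXiv:1511.08879 — 4 statements merged into one kernel-verified Lean document; each statement's English description precedes it below -/
import Mathlib

section
/- For every nonnegative integer n, the generalized q-factorials are expressed through the q-Gamma function as (2n)!_{q,α} = (1+q)^{2n} Γ_{q²}(α+n+1) Γ_{q²}(n+1) / Γ_{q²}(α+1) and (2n+1)!_{q,α} = (1+q)^{2n+1} Γ_{q²}(α+n+2) Γ_{q²}(n+1) / Γ_{q²}(α+1). -/
open scoped BigOperators
open Real Filter

noncomputable section

/-- q-shifted factorial `(a;q)_n`. -/
def qPoch (a q : ℝ) (n : ℕ) : ℝ := ∏ k ∈ Finset.range n, (1 - a * q ^ k)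

/-- infinite q-shifted factorial `(a;q)_∞`. -/
def qPochInf (a q : ℝ) : ℝ := ∏' k : ℕ, (1 - a * q ^ k)

/-- q-number `⟦x⟧_q = (1-q^x)/(1-q)`. -/
def qNumber (q x : ℝ) : ℝ := (1 - q ^ x) / (1 - q)

/-- generalized q-integer `⟦n⟧_{q,α}`: equals `⟦n⟧_q` for even `n` and
`⟦n+2α+1⟧_q` for odd `n` (so `⟦2m+1⟧_{q,α} = ⟦2m+2α+2⟧_q`). -/
def qNumAlpha (q α : ℝ) (n : ℕ) : ℝ :=
  if n % 2 = 0 then qNumber q n else qNumber q (n + 2 * α + 1)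

/-- generalized q-factorial `n!_{q,α}`. -/
def qFactAlpha (q α : ℝ) (n : ℕ) : ℝ := ∏ k ∈ Finset.range n, qNumAlpha q α (k + 1)

/-- generalized q-shifted factorial `(q;q)_{n,α} = (1-q)^n n!_{q,α}`. -/
def qPochAlpha (q α : ℝ) (n : ℕ) : ℝ := (1 - q) ^ n * qFactAlpha q α n

/-- generalized discrete q-Hermite II polynomials `h̃_{n,α}(x;q)`. -/
def hTilde (q α : ℝ) (n : ℕ) (x : ℝ) : ℝ :=
  qPoch q q n * ∑ k ∈ Finset.range (n / 2 + 1),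
    (-1 : ℝ) ^ k * q ^ ((k * (2 * k + 1) : ℤ) - (2 * n * k : ℤ)) * x ^ (n - 2 * k) /
      (qPoch (q ^ 2) (q ^ 2) k * qPochAlpha q α (n - 2 * k))

/-- the weight `ω_α(x;q) = e_{q²}(-q^{-2α-1}x²) = 1/∏_{k≥0}(1+q^{-2α-1}x²q^{2k})`. -/
def omegaAlpha (q α x : ℝ) : ℝ :=
  (∏' k : ℕ, (1 + q ^ (-(2 * α + 1)) * x ^ 2 * q ^ (2 * k)))⁻¹

/-- normalization constant `c_α`. -/
def cAlpha (q α : ℝ) : ℝ :=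
  Real.sqrt (qPochInf (-q ^ (-(2 * α + 1))) (q ^ 2) * qPochInf (-q ^ (2 * α + 3)) (q ^ 2) *
      qPochInf (q ^ (2 * α + 2)) (q ^ 2) /
    (2 * (1 - q) *
      (qPochInf (-q) (q ^ 2) * qPochInf (-q) (q ^ 2) * qPochInf (q ^ 2) (q ^ 2))))

/-- normalization constant `d_{n,α} = c_α q^{n²/2} (q;q)_{n,α}^{1/2} / (q;q)_n`. -/
def dAlpha (q α : ℝ) (n : ℕ) : ℝ :=
  cAlpha q α * q ^ (((n : ℝ) ^ 2) / 2) * Real.sqrt (qPochAlpha q α n) / qPoch q q n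

/-- the (q,α)-deformed Hermite functions `φ_n^α(x;q)`. -/
def phiQ (q α : ℝ) (n : ℕ) (x : ℝ) : ℝ :=
  dAlpha q α n * Real.sqrt (omegaAlpha q α x) * hTilde q α n x

/-- parity indicator `θ(n)`: 1 if `n` is odd, 0 if `n` is even. -/
def theta (n : ℕ) : ℝ := if n % 2 = 1 then 1 else 0

/-- the q-Gamma function `Γ_q(z) = (q;q)_∞ / (q^z;q)_∞ · (1-q)^{1-z}`. -/
def qGammaF (q z : ℝ) : ℝ := qPochInf q q / qPochInf (q ^ z) q * (1 - q) ^ (1 - z)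

/-- Rosenblum generalized factorial `γ_ν(n)`. -/
def gammaGen (ν : ℝ) (n : ℕ) : ℝ :=
  2 ^ n * (Nat.factorial (n / 2) : ℝ) *
    Real.Gamma (ν + (((n + 1) / 2 : ℕ) : ℝ) + 1 / 2) / Real.Gamma (ν + 1 / 2)

/-- generalized Hermite polynomials `H_n^ν(x)`. -/
def HGen (ν : ℝ) (n : ℕ) (x : ℝ) : ℝ :=
  (Nat.factorial n : ℝ) * ∑ k ∈ Finset.range (n / 2 + 1),
    (-1 : ℝ) ^ k * (2 * x) ^ (n - 2 * k) / ((Nat.factorial k : ℝ) * gammaGen ν (n - 2 * k))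

/-- Rosenblum generalized Hermite functions `φ_n^ν(x)`. -/
def phiGen (ν : ℝ) (n : ℕ) (x : ℝ) : ℝ :=
  Real.sqrt (gammaGen ν n / Real.Gamma (ν + 1 / 2)) * Real.exp (-x ^ 2 / 2) *
    HGen ν n x / ((2 : ℝ) ^ ((n : ℝ) / 2) * (Nat.factorial n : ℝ))

/-- symmetric q-number `[x]_s = (s^x - s^{-x})/(s - s^{-1})`. -/
def qNumSym (s x : ℝ) : ℝ := (s ^ x - s ^ (-x)) / (s - s⁻¹)

/-- Euler q-exponential `e_q(z) = Σ z^k/(q;q)_k`. -/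
def eExp (q z : ℝ) : ℝ := ∑' k : ℕ, z ^ k / qPoch q q k

/-- generalized q-exponential `E_{q,α}(z) = Σ q^{k(k-1)/2} z^k/(q;q)_{k,α}`. -/
def bigEAlpha (q α z : ℝ) : ℝ := ∑' k : ℕ, q ^ (k * (k - 1) / 2) * z ^ k / qPochAlpha q α k

/-- generalized q-exponential `e_{q,α}(z) = Σ z^k/(q;q)_{k,α}`. -/
def eExpAlpha (q α z : ℝ) : ℝ := ∑' k : ℕ, z ^ k / qPochAlpha q α k

lemma summable_log_one_sub {f : ℕ → ℝ} (hf : Summable f) :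
    Summable fun n => Real.log (1 - f n) := by
  have hd : HasDerivAt (fun z : ℝ => Real.log (1 - z)) (-1) 0 := by
    have h1 : HasDerivAt (fun z : ℝ => 1 - z) (-1) 0 := by
      simpa using (hasDerivAt_id (0:ℝ)).const_sub 1
    have := (Real.hasDerivAt_log (by norm_num : (1:ℝ) - 0 ≠ 0)).comp 0 h1
    simpa [Function.comp_def] using this
  have hO : (fun z : ℝ => Real.log (1 - z)) =O[nhds (0:ℝ)] id := by
    have := hd.isBigO_sub
    have h' : (fun z : ℝ => Real.log (1 - z)) =O[nhds (0:ℝ)] (fun x : ℝ => x) := by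
      simpa using this
    exact h'
  exact hO.comp_summable hf

lemma factor_pos {a q : ℝ} (ha0 : 0 < a) (ha1 : a < 1) (hq0 : 0 < q) (hq1 : q < 1) (k : ℕ) :
    0 < 1 - a * q ^ k := by
  have h1 : a * q ^ k ≤ a * 1 := by
    apply mul_le_mul_of_nonneg_left _ ha0.le
    exact pow_le_one₀ hq0.le hq1.le
  nlinarith

lemma summable_aq {a q : ℝ} (hq0 : 0 < q) (hq1 : q < 1) :
    Summable fun k : ℕ => a * q ^ k :=
  (summable_geometric_of_lt_one hq0.le hq1).mul_left a

lemma qPochInf_pos {a q : ℝ} (ha0 : 0 < a) (ha1 : a < 1) (hq0 : 0 < q) (hq1 : q < 1) :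
    0 < qPochInf a q := by
  have hsum : Summable fun k : ℕ => Real.log (1 - a * q ^ k) :=
    summable_log_one_sub (summable_aq hq0 hq1)
  have h2 := Real.rexp_tsum_eq_tprod (f := fun k : ℕ => 1 - a * q ^ k)
    (fun k => factor_pos ha0 ha1 hq0 hq1 k) hsum
  rw [qPochInf, ← h2]
  exact Real.exp_pos _

lemma qPochInf_multipliable {a q : ℝ} (ha0 : 0 < a) (ha1 : a < 1) (hq0 : 0 < q) (hq1 : q < 1) :
    Multipliable fun k : ℕ => 1 - a * q ^ k := by
  have hsum : Summable fun k : ℕ => Real.log (1 - a * q ^ k) :=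
    summable_log_one_sub (summable_aq hq0 hq1)
  exact Real.multipliable_of_summable_log (f := fun k : ℕ => 1 - a * q ^ k)
    (fun k => factor_pos ha0 ha1 hq0 hq1 k) hsum

lemma qPochInf_shift {a q : ℝ} (ha0 : 0 < a) (ha1 : a < 1) (hq0 : 0 < q) (hq1 : q < 1) :
    qPochInf a q = (1 - a) * qPochInf (a * q) q := by
  have haq0 : 0 < a * q := mul_pos ha0 hq0
  have haq1 : a * q < 1 := by nlinarith
  have hm : Multipliable (fun n : ℕ => 1 - a * q ^ (n + 1)) :=
    (qPochInf_multipliable haq0 haq1 hq0 hq1).congr (fun n => by ring)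
  have h := tprod_eq_zero_mul' (f := fun k : ℕ => 1 - a * q ^ k) hm
  rw [qPochInf, h]
  simp only [pow_zero, mul_one, qPochInf]
  congr 1
  apply tprod_congr
  intro k
  ring

/-- functional equation for the q-Gamma function. -/
lemma qGammaF_step {Q z : ℝ} (hQ0 : 0 < Q) (hQ1 : Q < 1) (hz : 0 < z) :
    qGammaF Q (z + 1) = (1 - Q ^ z) / (1 - Q) * qGammaF Q z := by
  have hQz0 : (0:ℝ) < Q ^ z := Real.rpow_pos_of_pos hQ0 z
  have hQz1 : Q ^ z < 1 := Real.rpow_lt_one hQ0.le hQ1 hz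
  have hshift : qPochInf (Q ^ z) Q = (1 - Q ^ z) * qPochInf (Q ^ z * Q) Q :=
    qPochInf_shift hQz0 hQz1 hQ0 hQ1
  have hrpow : Q ^ (z + 1) = Q ^ z * Q := by
    rw [Real.rpow_add hQ0, Real.rpow_one]
  have h1Q : (0:ℝ) < 1 - Q := by linarith
  have hexp : (1 - Q) ^ (1 - (z + 1)) = (1 - Q) ^ (1 - z) / (1 - Q) := by
    rw [show (1 - (z+1)) = (1 - z) - 1 by ring, Real.rpow_sub h1Q, Real.rpow_one]
  have hX : qPochInf (Q ^ z * Q) Q ≠ 0 := by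
    have : 0 < Q ^ z * Q := mul_pos hQz0 hQ0
    have h2 : Q ^ z * Q < 1 := by nlinarith
    exact (qPochInf_pos this h2 hQ0 hQ1).ne'
  have h1z : (1:ℝ) - Q ^ z ≠ 0 := by linarith
  have h1Q' : (1:ℝ) - Q ≠ 0 := h1Q.ne'
  rw [qGammaF, qGammaF, hrpow, hshift, hexp]
  field_simp

lemma qGammaF_one {Q : ℝ} (hQ0 : 0 < Q) (hQ1 : Q < 1) : qGammaF Q 1 = 1 := by
  rw [qGammaF, Real.rpow_one, sub_self, Real.rpow_zero,
    div_self (qPochInf_pos hQ0 hQ1 hQ0 hQ1).ne', one_mul]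

lemma qGammaF_pos {Q z : ℝ} (hQ0 : 0 < Q) (hQ1 : Q < 1) (hz : 0 < z) : 0 < qGammaF Q z := by
  have hQz0 : (0:ℝ) < Q ^ z := Real.rpow_pos_of_pos hQ0 z
  have hQz1 : Q ^ z < 1 := Real.rpow_lt_one hQ0.le hQ1 hz
  have h1Q : (0:ℝ) < 1 - Q := by linarith
  exact mul_pos (div_pos (qPochInf_pos hQ0 hQ1 hQ0 hQ1) (qPochInf_pos hQz0 hQz1 hQ0 hQ1))
    (Real.rpow_pos_of_pos h1Q _)

lemma qFactAlpha_succ (q α : ℝ) (m : ℕ) :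
    qFactAlpha q α (m + 1) = qFactAlpha q α m * qNumAlpha q α (m + 1) :=
  Finset.prod_range_succ _ _


/-- generalized q-factorials via the q-Gamma function. -/
theorem stmt_1 (q α : ℝ) (hq0 : 0 < q) (hq1 : q < 1) (hα : -1 < α) (n : ℕ) :
    qFactAlpha q α (2 * n) =
      (1 + q) ^ (2 * n) * qGammaF (q ^ 2) (α + n + 1) * qGammaF (q ^ 2) (n + 1) /
        qGammaF (q ^ 2) (α + 1) ∧
    qFactAlpha q α (2 * n + 1) =
      (1 + q) ^ (2 * n + 1) * qGammaF (q ^ 2) (α + n + 2) * qGammaF (q ^ 2) (n + 1) /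
        qGammaF (q ^ 2) (α + 1) := by
  have hq2_0 : (0:ℝ) < q ^ 2 := by positivity
  have hq2_1 : q ^ 2 < 1 := by nlinarith
  have h1q : (1:ℝ) - q ≠ 0 := by linarith
  have h1q' : (1:ℝ) + q ≠ 0 := by linarith
  have key : ∀ z : ℝ, (1 - q ^ (2 * z)) / (1 - q) = (1 + q) * ((1 - (q ^ 2) ^ z) / (1 - q ^ 2)) := by
    intro z
    have h2 : ((q ^ 2 : ℝ)) ^ z = q ^ (2 * z) := by
      rw [← Real.rpow_natCast q 2, ← Real.rpow_mul hq0.le]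
      norm_num
    rw [h2, show (1:ℝ) - q ^ 2 = (1 - q) * (1 + q) from by ring]
    field_simp
  have hΓpos : 0 < qGammaF (q ^ 2) (α + 1) := qGammaF_pos hq2_0 hq2_1 (by linarith)
  have hA : ∀ m : ℕ, qNumAlpha q α (2 * m + 1)
      = (1 + q) * ((1 - (q ^ 2) ^ (α + (m:ℝ) + 1)) / (1 - q ^ 2)) := by
    intro m
    rw [qNumAlpha, if_neg (by omega), qNumber,
      show ((2 * m + 1 : ℕ) : ℝ) + 2 * α + 1 = 2 * (α + (m:ℝ) + 1) from by push_cast; ring, key]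
  have hB : ∀ m : ℕ, qNumAlpha q α (2 * m + 1 + 1)
      = (1 + q) * ((1 - (q ^ 2) ^ ((m:ℝ) + 1)) / (1 - q ^ 2)) := by
    intro m
    rw [qNumAlpha, if_pos (by omega), qNumber,
      show ((2 * m + 1 + 1 : ℕ) : ℝ) = 2 * ((m:ℝ) + 1) from by push_cast; ring, key]
  have hg1 : ∀ m : ℕ, qGammaF (q ^ 2) (α + (m:ℝ) + 1 + 1)
      = (1 - (q ^ 2) ^ (α + (m:ℝ) + 1)) / (1 - q ^ 2) * qGammaF (q ^ 2) (α + (m:ℝ) + 1) := by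
    intro m
    have hmp : (0:ℝ) ≤ (m:ℝ) := Nat.cast_nonneg m
    exact qGammaF_step hq2_0 hq2_1 (by linarith)
  have hg2 : ∀ m : ℕ, qGammaF (q ^ 2) ((m:ℝ) + 1 + 1)
      = (1 - (q ^ 2) ^ ((m:ℝ) + 1)) / (1 - q ^ 2) * qGammaF (q ^ 2) ((m:ℝ) + 1) := by
    intro m
    have hmp : (0:ℝ) ≤ (m:ℝ) := Nat.cast_nonneg m
    exact qGammaF_step hq2_0 hq2_1 (by linarith)
  have heven : ∀ m : ℕ, qFactAlpha q α (2 * m) =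
      (1 + q) ^ (2 * m) * qGammaF (q ^ 2) (α + m + 1) * qGammaF (q ^ 2) (m + 1) /
        qGammaF (q ^ 2) (α + 1) := by
    intro m
    induction m with
    | zero =>
      simp only [Nat.mul_zero, pow_zero, Nat.cast_zero, add_zero, zero_add, one_mul]
      rw [qFactAlpha, Finset.range_zero, Finset.prod_empty, qGammaF_one hq2_0 hq2_1, mul_one,
        div_self hΓpos.ne']
    | succ m ih =>
      rw [show 2 * (m + 1) = 2 * m + 1 + 1 from by ring, qFactAlpha_succ, qFactAlpha_succ, ih,
        hA m, hB m]
      push_cast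
      rw [show α + ((m:ℝ) + 1) + 1 = α + (m:ℝ) + 1 + 1 from by ring, hg1 m, hg2 m]
      ring
  refine ⟨heven n, ?_⟩
  rw [qFactAlpha_succ, heven n, hA n,
    show α + (n:ℝ) + 2 = α + (n:ℝ) + 1 + 1 from by ring, hg1 n]
  ring
end
end

section
/- The annihilation operator acts on the (q,α)-deformed Hermite functions by lowering the index: for every integer n ≥ 1 and every real x ≠ 0, (q^{1/2}/(√(1−q)·x)) · [ √(1+q^{−2α−3}x²) · φ_n^α(q^{−1}x;q) − q^{(2α+1)θ(n)} · φ_n^α(x;q) ] = √(⟦n⟧_{q,α}) · φ_{n−1}^α(x;q), where θ(n)=1 if n is odd and θ(n)=0 if n is even; moreover for n = 0 and every real x ≠ 0, √(1+q^{−2α−3}x²) · φ_0^α(q^{−1}x;q) − φ_0^α(x;q) = 0. -/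
open scoped BigOperators
open Real Filter

noncomputable section

section Helpers

variable {q α : ℝ} (hq0 : 0 < q) (hq1 : q < 1) (hα : -1 < α)

include hq1 in
lemma one_sub_q_pos : (0:ℝ) < 1 - q := by linarith

include hq0 hq1 in
lemma qNumAlpha_pos (n : ℕ) (hn : 1 ≤ n) (hα : -1 < α) : 0 < qNumAlpha q α n := by
  unfold qNumAlpha qNumber
  have h1q : (0:ℝ) < 1 - q := by linarith
  split_ifs with h
  · apply div_pos _ h1q
    have : q ^ (n:ℝ) < 1 := Real.rpow_lt_one hq0.le hq1 (by exact_mod_cast Nat.pos_of_ne_zero (by omega))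
    linarith
  · apply div_pos _ h1q
    have : q ^ ((n:ℝ) + 2*α + 1) < 1 := by
      apply Real.rpow_lt_one hq0.le hq1
      have : (1:ℝ) ≤ (n:ℝ) := by exact_mod_cast hn
      linarith
    linarith

include hq0 hq1 hα in
lemma qPochAlpha_pos (n : ℕ) : 0 < qPochAlpha q α n := by
  unfold qPochAlpha qFactAlpha
  apply mul_pos (pow_pos (by linarith) n)
  exact Finset.prod_pos fun k _ => qNumAlpha_pos hq0 hq1 (k+1) (by omega) hα

include hq0 hq1 in
lemma qPoch_qq_pos (n : ℕ) : 0 < qPoch q q n := by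
  unfold qPoch
  apply Finset.prod_pos
  intro k _
  have : q * q ^ k < 1 := by
    calc q * q ^ k ≤ q * 1 := by
          exact mul_le_mul_of_nonneg_left (pow_le_one₀ hq0.le hq1.le) hq0.le
      _ < 1 := by linarith
  linarith

include hq0 hq1 in
lemma qPoch_q2_pos (n : ℕ) : 0 < qPoch (q^2) (q^2) n := by
  unfold qPoch
  apply Finset.prod_pos
  intro k _
  have h2 : q^2 < 1 := by nlinarith
  have h2' : (0:ℝ) < q^2 := by positivity
  have : q^2 * (q^2) ^ k < 1 := by
    calc q^2 * (q^2) ^ k ≤ q^2 * 1 := mul_le_mul_of_nonneg_left (pow_le_one₀ h2'.le h2.le) h2'.le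
      _ < 1 := by linarith
  linarith

lemma qPochAlpha_succ (n : ℕ) :
    qPochAlpha q α (n+1) = qPochAlpha q α n * ((1-q) * qNumAlpha q α (n+1)) := by
  unfold qPochAlpha qFactAlpha
  rw [Finset.prod_range_succ, pow_succ]
  ring

lemma qPoch_qq_succ (n : ℕ) :
    qPoch q q (n+1) = qPoch q q n * (1 - q^(n+1)) := by
  unfold qPoch
  rw [Finset.prod_range_succ, pow_succ']

end Helpers

section Tprod
set_option maxHeartbeats 1000000

variable {q : ℝ} (hq0 : 0 < q) (hq1 : q < 1)

include hq0 hq1 in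
lemma multipliable_aux {c : ℝ} (hc : 0 ≤ c) :
    Multipliable (fun k : ℕ => 1 + c * q ^ (2*k)) := by
  have hpos : ∀ k : ℕ, (0:ℝ) < 1 + c * q ^ (2*k) := by
    intro k; positivity
  have hsum : Summable (fun k : ℕ => Real.log (1 + c * q ^ (2*k))) := by
    have hg : Summable (fun k : ℕ => c * q ^ (2*k)) := by
      have : Summable (fun k : ℕ => (q^2) ^ k) :=
        summable_geometric_of_lt_one (by positivity) (by nlinarith)
      simpa [pow_mul] using this.mul_left c
    apply Summable.of_nonneg_of_le _ _ hg
    · intro k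
      exact Real.log_nonneg (by nlinarith [pow_nonneg hq0.le (2*k)])
    · intro k
      have := Real.log_le_sub_one_of_pos (hpos k)
      linarith
  exact Real.multipliable_of_summable_log hpos hsum

include hq0 hq1 in
lemma tprod_shift {c : ℝ} (hc : 0 ≤ c) :
    ∏' k : ℕ, (1 + c * q ^ (2*k)) = (1 + c) * ∏' k : ℕ, (1 + (c * q^2) * q ^ (2*k)) := by
  have M1 : Multipliable (fun n : ℕ => 1 + c * q ^ (2*(n+1))) :=
    (multipliable_aux hq0 hq1 (c := c * q^2) (by positivity)).congr
      (fun n => by rw [show 2*(n+1) = 2*n + 2 by ring, pow_add]; ring)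
  have h := tprod_eq_zero_mul' (f := fun k : ℕ => 1 + c * q ^ (2*k)) M1
  rw [h]
  norm_num
  exact Or.inl (tprod_congr fun k => by rw [show 2*(k+1) = 2*k + 2 by ring, pow_add]; ring)

include hq0 hq1 in
lemma one_le_tprod_aux {c : ℝ} (hc : 0 ≤ c) :
    1 ≤ ∏' k : ℕ, (1 + c * q ^ (2*k)) := by
  obtain ⟨a, ha⟩ := multipliable_aux hq0 hq1 hc
  rw [ha.tprod_eq]
  refine ge_of_tendsto' ha fun s => ?_
  calc (1:ℝ) = ∏ _k ∈ s, 1 := by simp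
    _ ≤ ∏ k ∈ s, (1 + c * q ^ (2*k)) := by
        apply Finset.prod_le_prod
        · intros; norm_num
        · intro k _
          nlinarith [mul_nonneg hc (pow_nonneg hq0.le (2*k))]

end Tprod

section Omega

variable {q α : ℝ} (hq0 : 0 < q) (hq1 : q < 1)

include hq0 in
lemma rpow_key1 (x : ℝ) : q ^ (-(2*α+1)) * (x/q)^2 = q ^ (-(2*α+3)) * x^2 := by
  have h2 : (q:ℝ)^(2:ℕ) = q ^ ((2:ℕ):ℝ) := (Real.rpow_natCast q 2).symm
  rw [div_pow, div_eq_mul_inv, mul_comm (x^2), ← mul_assoc, h2,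
    ← Real.rpow_neg hq0.le, ← Real.rpow_add hq0]
  norm_num
  left
  ring_nf

include hq0 in
lemma rpow_key2 (x : ℝ) : q ^ (-(2*α+3)) * x^2 * q^(2:ℕ) = q ^ (-(2*α+1)) * x^2 := by
  have h2 : (q:ℝ)^(2:ℕ) = q ^ ((2:ℕ):ℝ) := (Real.rpow_natCast q 2).symm
  rw [mul_comm _ (q^(2:ℕ)), ← mul_assoc, h2, ← Real.rpow_add hq0]
  norm_num
  left
  ring_nf

include hq0 hq1 in
lemma omega_pos (x : ℝ) : 0 < omegaAlpha q α x := by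
  unfold omegaAlpha
  have hc : (0:ℝ) ≤ q ^ (-(2*α+1)) * x^2 := by positivity
  have := one_le_tprod_aux hq0 hq1 hc
  positivity

include hq0 hq1 in
lemma omega_shift (x : ℝ) :
    omegaAlpha q α (x/q) = omegaAlpha q α x / (1 + q ^ (-(2*α+3)) * x^2) := by
  unfold omegaAlpha
  have hA : (0:ℝ) ≤ q ^ (-(2*α+3)) * x^2 := by positivity
  have e1 : ∀ k : ℕ, 1 + q ^ (-(2*α+1)) * (x/q)^2 * q^(2*k)
      = 1 + (q ^ (-(2*α+3)) * x^2) * q^(2*k) := by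
    intro k; rw [rpow_key1 hq0]
  rw [tprod_congr e1, tprod_shift hq0 hq1 hA]
  have e2 : ∀ k : ℕ, 1 + (q ^ (-(2*α+3)) * x^2 * q^2) * q^(2*k)
      = 1 + q ^ (-(2*α+1)) * x^2 * q^(2*k) := by
    intro k; rw [rpow_key2 hq0]
  rw [tprod_congr e2, mul_inv, div_eq_mul_inv, mul_comm]

include hq0 hq1 in
lemma sqrt_omega_shift (x : ℝ) :
    Real.sqrt (1 + q ^ (-(2*α+3)) * x^2) * Real.sqrt (omegaAlpha q α (x/q))
      = Real.sqrt (omegaAlpha q α x) := by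
  have hA : (0:ℝ) ≤ q ^ (-(2*α+3)) * x^2 := by positivity
  have h1A : (0:ℝ) < 1 + q ^ (-(2*α+3)) * x^2 := by linarith
  rw [omega_shift hq0 hq1, Real.sqrt_div (omega_pos hq0 hq1 x).le, mul_comm,
    div_mul_cancel₀]
  exact Real.sqrt_ne_zero'.mpr h1A

end Omega

section Key

variable {q α : ℝ} (hq0 : 0 < q) (hq1 : q < 1) (hα : -1 < α)

lemma theta_add_two_mul (k m : ℕ) : theta (2*k + m) = theta m := by
  unfold theta
  congr 1
  simp [Nat.add_mul_mod_self_left, Nat.mul_add_mod]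

include hq0 hq1 in
lemma qnum_key (p : ℕ) :
    1 - q ^ ((2*α+1) * theta (p+1)) * q^(p+1) = (1-q) * qNumAlpha q α (p+1) := by
  have hq1' : (1:ℝ) - q ≠ 0 := by intro h; nlinarith
  unfold theta qNumAlpha qNumber
  rcases Nat.even_or_odd (p+1) with h | h
  · have h2 : (p+1) % 2 = 0 := Nat.even_iff.mp h
    simp only [h2, if_true]
    rw [if_neg Nat.zero_ne_one, mul_zero, Real.rpow_zero,
      one_mul, mul_div_cancel₀ _ hq1', Real.rpow_natCast]
  · have h2 : (p+1) % 2 = 1 := Nat.odd_iff.mp h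
    simp only [h2]
    simp only [if_true]
    rw [if_neg one_ne_zero, mul_one, mul_div_cancel₀ _ hq1',
      show ((p+1:ℕ):ℝ)+2*α+1 = (2*α+1) + ((p+1:ℕ):ℝ) by ring,
      Real.rpow_add hq0 (2*α+1) ((p+1:ℕ):ℝ), Real.rpow_natCast]

end Key

section Term

variable {q α : ℝ} (hq0 : 0 < q) (hq1 : q < 1) (hα : -1 < α)

include hq0 hq1 hα in
lemma term_eq (m k : ℕ) (hk : 2*k ≤ m) (x : ℝ) :
    (-1:ℝ)^k * q^((k*(2*k+1):ℤ) - (2*(m+1)*k:ℤ)) * (x/q)^((m+1) - 2*k) /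
        (qPoch (q^2) (q^2) k * qPochAlpha q α ((m+1) - 2*k))
      - q^((2*α+1) * theta (m+1)) *
        ((-1:ℝ)^k * q^((k*(2*k+1):ℤ) - (2*(m+1)*k:ℤ)) * x^((m+1)-2*k) /
          (qPoch (q^2) (q^2) k * qPochAlpha q α ((m+1)-2*k)))
      = q^(-(((m:ℕ)+1:ℕ):ℤ)) * x *
        ((-1:ℝ)^k * q^((k*(2*k+1):ℤ) - (2*m*k:ℤ)) * x^(m - 2*k) /
          (qPoch (q^2) (q^2) k * qPochAlpha q α (m - 2*k))) := by
  obtain ⟨p, rfl⟩ : ∃ p, m = 2*k + p := ⟨m - 2*k, by omega⟩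
  have hqne : q ≠ 0 := hq0.ne'
  have e0 : 2*k + p + 1 - 2*k = p + 1 := by omega
  have e0' : 2*k + p - 2*k = p := by omega
  have etheta : theta (2*k + p + 1) = theta (p+1) := by
    rw [show 2*k+p+1 = 2*k + (p+1) by ring, theta_add_two_mul]
  have key := qnum_key hq0 hq1 (α := α) p
  have hD : qPoch (q^2) (q^2) k ≠ 0 := (qPoch_q2_pos hq0 hq1 k).ne'
  have hP : qPochAlpha q α p ≠ 0 := (qPochAlpha_pos hq0 hq1 hα p).ne'
  have hqN : (1-q) * qNumAlpha q α (p+1) ≠ 0 := by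
    have h1 := qNumAlpha_pos hq0 hq1 (p+1) (by omega) hα
    have : (0:ℝ) < (1-q) * qNumAlpha q α (p+1) := mul_pos (by linarith) h1
    exact this.ne'
  rw [e0, e0', etheta, qPochAlpha_succ, div_pow]
  have eE : q ^ ((k:ℤ) * (2 * (k:ℤ) + 1) - 2 * (((2 * k + p : ℕ):ℤ) + 1) * (k:ℤ))
      = q ^ ((k:ℤ) * (2 * (k:ℤ) + 1) - 2 * ((2 * k + p : ℕ):ℤ) * (k:ℤ)) / q^(2*k) := by
    rw [← zpow_natCast q (2*k), ← zpow_sub₀ hqne]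
    congr 1
    push_cast
    ring
  have eneg : q ^ (-(((2*k+p+1:ℕ)):ℤ)) = 1 / q^(2*k+p+1) := by
    rw [zpow_neg, zpow_natCast, one_div]
  rw [eE, eneg]
  set A := q ^ ((k:ℤ) * (2 * (k:ℤ) + 1) - 2 * ((2 * k + p : ℕ):ℤ) * (k:ℤ)) with hA
  set Q := q ^ ((2*α+1) * theta (p+1)) with hQ
  set N := (1-q) * qNumAlpha q α (p+1) with hNN
  set D := qPoch (q^2) (q^2) k with hDD
  set P := qPochAlpha q α p with hPP
  have hqp : (q:ℝ)^(p+1) ≠ 0 := pow_ne_zero _ hqne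
  have hq2k : (q:ℝ)^(2*k) ≠ 0 := pow_ne_zero _ hqne
  have key2 : 1 - Q * q^(p+1) = (1-q) * qNumAlpha q α (p+1) := key
  field_simp
  linear_combination (A * x * x^p * q^(p+1) * q^(2*k)) * key2

end Term

section Rec

variable {q α : ℝ} (hq0 : 0 < q) (hq1 : q < 1) (hα : -1 < α)

include hq0 hq1 hα in
lemma hTilde_rec (m : ℕ) (x : ℝ) :
    hTilde q α (m+1) (x/q) - q^((2*α+1) * theta (m+1)) * hTilde q α (m+1) x
      = q^(-((m+1:ℕ):ℤ)) * (1 - q^(m+1)) * x * hTilde q α m x := by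
  unfold hTilde
  rw [qPoch_qq_succ]
  have hsum :
      (∑ k ∈ Finset.range ((m+1) / 2 + 1),
        (-1 : ℝ) ^ k * q ^ ((k * (2 * k + 1) : ℤ) - (2 * (m+1) * k : ℤ)) * (x/q) ^ ((m+1) - 2 * k) /
          (qPoch (q ^ 2) (q ^ 2) k * qPochAlpha q α ((m+1) - 2 * k)))
      - q^((2*α+1) * theta (m+1)) *
        (∑ k ∈ Finset.range ((m+1) / 2 + 1),
          (-1 : ℝ) ^ k * q ^ ((k * (2 * k + 1) : ℤ) - (2 * (m+1) * k : ℤ)) * x ^ ((m+1) - 2 * k) /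
            (qPoch (q ^ 2) (q ^ 2) k * qPochAlpha q α ((m+1) - 2 * k)))
      = q^(-((m+1:ℕ):ℤ)) * x *
        (∑ k ∈ Finset.range (m / 2 + 1),
          (-1 : ℝ) ^ k * q ^ ((k * (2 * k + 1) : ℤ) - (2 * m * k : ℤ)) * x ^ (m - 2 * k) /
            (qPoch (q ^ 2) (q ^ 2) k * qPochAlpha q α (m - 2 * k))) := by
    rw [Finset.mul_sum, Finset.mul_sum, ← Finset.sum_sub_distrib]
    rcases Nat.even_or_odd m with hm | hm
    · have hm2 : m % 2 = 0 := Nat.even_iff.mp hm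
      have hr : (m+1)/2 = m/2 := by omega
      rw [hr]
      refine Finset.sum_congr rfl fun k hk => ?_
      have hk' : 2*k ≤ m := by
        have := Finset.mem_range.mp hk
        have := Nat.even_iff.mp hm
        omega
      exact term_eq hq0 hq1 hα m k hk' x
    · have hm2 : m % 2 = 1 := Nat.odd_iff.mp hm
      have hr : (m+1)/2 + 1 = (m/2 + 1) + 1 := by omega
      rw [hr, Finset.sum_range_succ]
      have hQ1 : q ^ ((2*α+1) * theta (m+1)) = 1 := by
        unfold theta
        rw [if_neg (by omega), mul_zero, Real.rpow_zero]
      have hz : (m+1) - 2 * (m/2 + 1) = 0 := by omega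
      rw [hQ1, hz, pow_zero, pow_zero, one_mul, sub_self, add_zero]
      refine Finset.sum_congr rfl fun k hk => ?_
      have hk' : 2*k ≤ m := by
        have := Finset.mem_range.mp hk
        omega
      have h := term_eq hq0 hq1 hα m k hk' x
      rw [hQ1] at h
      linear_combination h
  push_cast at hsum ⊢
  linear_combination (qPoch q q m * (1 - q^(m+1))) * hsum
end Rec

section Ratio

variable {q α : ℝ} (hq0 : 0 < q) (hq1 : q < 1) (hα : -1 < α)

include hq0 hq1 hα in
lemma d_ratio (m : ℕ) :
    Real.sqrt q * (q^(-((m+1:ℕ):ℤ)) * (1 - q^(m+1))) * dAlpha q α (m+1)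
      = Real.sqrt (1-q) * Real.sqrt (qNumAlpha q α (m+1)) * dAlpha q α m := by
  have h1q : (0:ℝ) < 1 - q := by linarith
  have hqm : (0:ℝ) < 1 - q^(m+1) := by
    have : q^(m+1) < 1 := pow_lt_one₀ hq0.le hq1 (by omega)
    linarith
  have hPm : 0 < qPochAlpha q α m := qPochAlpha_pos hq0 hq1 hα m
  have hQm : 0 < qPoch q q m := qPoch_qq_pos hq0 hq1 m
  have hNum : 0 < qNumAlpha q α (m+1) := qNumAlpha_pos hq0 hq1 (m+1) (by omega) hα
  unfold dAlpha
  rw [qPochAlpha_succ, qPoch_qq_succ, Real.sqrt_mul hPm.le, Real.sqrt_mul h1q.le]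
  have E : Real.sqrt q * q^(-((m+1:ℕ):ℤ)) * q^((((m+1:ℕ)):ℝ)^2/2) = q^(((m:ℕ):ℝ)^2/2) := by
    rw [Real.sqrt_eq_rpow, ← Real.rpow_intCast q (-((m+1:ℕ):ℤ)), ← Real.rpow_add hq0,
      ← Real.rpow_add hq0]
    congr 1
    push_cast
    ring
  set Z := q ^ (-((m+1:ℕ):ℤ)) with hZ
  set R1 := q ^ ((((m+1:ℕ)):ℝ)^2/2) with hR1
  set R0 := q ^ (((m:ℕ):ℝ)^2/2) with hR0
  field_simp
  linear_combination (cAlpha q α) * E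

end Ratio

lemma hTilde_zero (q α x : ℝ) : hTilde q α 0 x = 1 := by
  simp [hTilde, qPoch, qPochAlpha, qFactAlpha]


/-- the annihilation operator lowers the index of the deformed Hermite
functions, and kills the ground state. -/
theorem stmt_5 (q α : ℝ) (hq0 : 0 < q) (hq1 : q < 1) (hα : -1 < α) :
    (∀ n : ℕ, 1 ≤ n → ∀ x : ℝ, x ≠ 0 →
      Real.sqrt q / (Real.sqrt (1 - q) * x) *
        (Real.sqrt (1 + q ^ (-(2 * α + 3)) * x ^ 2) * phiQ q α n (x / q) -
          q ^ ((2 * α + 1) * theta n) * phiQ q α n x) =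
      Real.sqrt (qNumAlpha q α n) * phiQ q α (n - 1) x) ∧
    (∀ x : ℝ, x ≠ 0 →
      Real.sqrt (1 + q ^ (-(2 * α + 3)) * x ^ 2) * phiQ q α 0 (x / q) - phiQ q α 0 x = 0) := by
  have h1q : (0:ℝ) < 1 - q := by linarith
  constructor
  · intro n hn x hx
    obtain ⟨m, rfl⟩ : ∃ m, n = m + 1 := ⟨n - 1, by omega⟩
    simp only [Nat.add_sub_cancel]
    unfold phiQ
    have w := sqrt_omega_shift hq0 hq1 (α := α) x
    rw [show Real.sqrt (1 + q ^ (-(2*α+3)) * x^2) *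
          (dAlpha q α (m+1) * Real.sqrt (omegaAlpha q α (x/q)) * hTilde q α (m+1) (x/q))
        = dAlpha q α (m+1) *
          (Real.sqrt (1 + q ^ (-(2*α+3)) * x^2) * Real.sqrt (omegaAlpha q α (x/q))) *
          hTilde q α (m+1) (x/q) by ring, w]
    have hrec := hTilde_rec hq0 hq1 hα m x
    have hd := d_ratio hq0 hq1 hα m
    have hs : Real.sqrt (1-q) ≠ 0 := by positivity
    rw [div_mul_eq_mul_div, div_eq_iff (mul_ne_zero hs hx)]
    linear_combination (Real.sqrt q * dAlpha q α (m+1) * Real.sqrt (omegaAlpha q α x)) * hrec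
      + (x * Real.sqrt (omegaAlpha q α x) * hTilde q α m x) * hd
  · intro x hx
    unfold phiQ
    have w := sqrt_omega_shift hq0 hq1 (α := α) x
    rw [hTilde_zero, hTilde_zero, mul_one, mul_one,
      show Real.sqrt (1 + q ^ (-(2*α+3)) * x^2) *
          (dAlpha q α 0 * Real.sqrt (omegaAlpha q α (x/q)))
        = dAlpha q α 0 *
          (Real.sqrt (1 + q ^ (-(2*α+3)) * x^2) * Real.sqrt (omegaAlpha q α (x/q))) by ring,
      w, sub_self]
end
end

section
/- The q-coherent state is an eigenfunction of the annihilation operator: for every real ζ with q(1−q)ζ² < 1, the function g_ζ(x) = √(ω_α(x;q)) · E_{q,α}(q^{1/2}(1−q)^{1/2} x ζ) satisfies, for every real x ≠ 0, (q^{1/2}/(√(1−q)·x)) · [ √(1+q^{−2α−3}x²) g_ζ(q^{−1}x) − (g_ζ)_e(x) − q^{2α+1} (g_ζ)_o(x) ] = ζ · g_ζ(x), where (g_ζ)_e(x) = (g_ζ(x)+g_ζ(−x))/2 and (g_ζ)_o(x) = (g_ζ(x)−g_ζ(−x))/2, and E_{q,α}(z) = Σ_{k=0}^∞ q^{k(k−1)/2}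 z^k/(q;q)_{k,α}. -/
open scoped BigOperators
open Real Filter

noncomputable section

/-- the (unnormalized) q-coherent state `g_ζ(x) = √(ω_α(x;q)) E_{q,α}(q^{1/2}(1-q)^{1/2}xζ)`. -/
def gCoh (q α ζ x : ℝ) : ℝ :=
  Real.sqrt (omegaAlpha q α x) * bigEAlpha q α (Real.sqrt q * Real.sqrt (1 - q) * x * ζ)

def muAux (q α : ℝ) (n : ℕ) : ℝ := if n % 2 = 0 then 1 else q ^ (2 * α + 1)

lemma hD (q α : ℝ) (hq0 : 0 < q) (hq1 : q < 1) (j : ℕ) :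
    (1 - q) * qNumAlpha q α j = 1 - q ^ j * muAux q α j := by
  have h1q : (1 : ℝ) - q ≠ 0 := by linarith
  unfold qNumAlpha qNumber muAux
  split
  · rw [mul_div_cancel₀ _ h1q, Real.rpow_natCast, mul_one]
  · rw [mul_div_cancel₀ _ h1q, show ((j:ℝ) + 2 * α + 1) = (j:ℝ) + (2 * α + 1) by ring,
      Real.rpow_add hq0, Real.rpow_natCast]

lemma hPsucc (q α : ℝ) (n : ℕ) :
    qPochAlpha q α (n + 1) = qPochAlpha q α n * ((1 - q) * qNumAlpha q α (n + 1)) := by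
  unfold qPochAlpha qFactAlpha
  rw [Finset.prod_range_succ, pow_succ]; ring

lemma hm_pos (q α : ℝ) (hq0 : 0 < q) (hq1 : q < 1) (hα : -1 < α) :
    0 < min (1 - q) (1 - q ^ (2 * α + 2)) := by
  have : q ^ (2 * α + 2) < 1 := Real.rpow_lt_one hq0.le hq1 (by linarith)
  exact lt_min (by linarith) (by linarith)

lemma hD_ge (q α : ℝ) (hq0 : 0 < q) (hq1 : q < 1) (hα : -1 < α) (j : ℕ) (hj : 1 ≤ j) :
    min (1 - q) (1 - q ^ (2 * α + 2)) ≤ 1 - q ^ j * muAux q α j := by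
  unfold muAux
  split
  · rename_i h
    have hj2 : 2 ≤ j := by omega
    have : q ^ j ≤ q := by
      calc q ^ j ≤ q ^ 1 := pow_le_pow_of_le_one hq0.le hq1.le hj
      _ = q := pow_one q
    refine le_trans (min_le_left _ _) (by linarith [this])
  · have : q ^ j * q ^ (2 * α + 1) = q ^ ((j : ℝ) + (2 * α + 1)) := by
      rw [← Real.rpow_natCast q j, ← Real.rpow_add hq0]
    rw [this]
    have hle : q ^ ((j : ℝ) + (2 * α + 1)) ≤ q ^ (2 * α + 2) := by
      apply Real.rpow_le_rpow_of_exponent_ge hq0 hq1.le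
      have : (1:ℝ) ≤ (j:ℝ) := by exact_mod_cast hj
      linarith
    exact le_trans (min_le_right _ _) (by linarith)

lemma hP_pos (q α : ℝ) (hq0 : 0 < q) (hq1 : q < 1) (hα : -1 < α) (n : ℕ) :
    0 < qPochAlpha q α n := by
  induction n with
  | zero => simp [qPochAlpha, qFactAlpha]
  | succ n ih =>
    rw [hPsucc, hD q α hq0 hq1]
    exact mul_pos ih (lt_of_lt_of_le (hm_pos q α hq0 hq1 hα) (hD_ge q α hq0 hq1 hα _ (by omega)))

lemma hSummable (q α : ℝ) (hq0 : 0 < q) (hq1 : q < 1) (hα : -1 < α) (z : ℝ) :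
    Summable (fun k : ℕ => q ^ (k * (k - 1) / 2) * z ^ k / qPochAlpha q α k) := by
  set m := min (1 - q) (1 - q ^ (2 * α + 2)) with hm
  have hmpos := hm_pos q α hq0 hq1 hα
  apply summable_of_ratio_norm_eventually_le (r := 1/2) (by norm_num)
  have htend : Filter.Tendsto (fun n : ℕ => q ^ n * |z|) Filter.atTop (nhds 0) := by
    simpa using (tendsto_pow_atTop_nhds_zero_of_lt_one hq0.le hq1).mul_const |z|
  have hev : ∀ᶠ n : ℕ in Filter.atTop, q ^ n * |z| ≤ m / 2 := by
    exact htend.eventually (eventually_le_nhds (by positivity))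
  filter_upwards [hev] with n hn
  have hPn := hP_pos q α hq0 hq1 hα n
  have hDn : m ≤ 1 - q ^ (n + 1) * muAux q α (n + 1) :=
    hD_ge q α hq0 hq1 hα (n + 1) (by omega)
  have hDpos : 0 < 1 - q ^ (n + 1) * muAux q α (n + 1) := lt_of_lt_of_le hmpos hDn
  have hfs : q ^ ((n + 1) * (n + 1 - 1) / 2) * z ^ (n + 1) / qPochAlpha q α (n + 1)
      = (q ^ (n * (n - 1) / 2) * z ^ n / qPochAlpha q α n) *
        (q ^ n * z / (1 - q ^ (n + 1) * muAux q α (n + 1))) := by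
    rw [hPsucc, hD q α hq0 hq1, Nat.triangle_succ, pow_add]
    field_simp
    ring
  rw [hfs, norm_mul, mul_comm]
  apply mul_le_mul_of_nonneg_right _ (norm_nonneg _)
  rw [Real.norm_eq_abs, abs_div, abs_of_pos hDpos, abs_mul, abs_of_pos (pow_pos hq0 n)]
  rw [div_le_iff₀ hDpos]
  calc q ^ n * |z| ≤ m / 2 := hn
    _ ≤ (1 - q ^ (n + 1) * muAux q α (n + 1)) / 2 := by linarith
    _ = 1 / 2 * (1 - q ^ (n + 1) * muAux q α (n + 1)) := by ring

lemma keyE (q α : ℝ) (hq0 : 0 < q) (hq1 : q < 1) (hα : -1 < α) (z : ℝ) :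
    bigEAlpha q α (z / q) - (bigEAlpha q α z + bigEAlpha q α (-z)) / 2 -
      q ^ (2 * α + 1) * ((bigEAlpha q α z - bigEAlpha q α (-z)) / 2) =
    z / q * bigEAlpha q α z := by
  have hqne : q ≠ 0 := ne_of_gt hq0
  set f : ℝ → ℕ → ℝ := fun w k => q ^ (k * (k - 1) / 2) * w ^ k / qPochAlpha q α k with hf
  have hS : ∀ w, HasSum (f w) (bigEAlpha q α w) := fun w => by
    unfold bigEAlpha; exact (hSummable q α hq0 hq1 hα w).hasSum
  set g : ℕ → ℝ := fun k =>
    f (z / q) k - (f z k + f (-z) k) / 2 - q ^ (2 * α + 1) * ((f z k - f (-z) k) / 2) with hg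
  have h1 : HasSum g (bigEAlpha q α (z / q) - (bigEAlpha q α z + bigEAlpha q α (-z)) / 2 -
      q ^ (2 * α + 1) * ((bigEAlpha q α z - bigEAlpha q α (-z)) / 2)) :=
    ((hS (z / q)).sub (((hS z).add (hS (-z))).div_const 2)).sub
      ((((hS z).sub (hS (-z))).div_const 2).mul_left _)
  have hg0 : g 0 = 0 := by
    simp [hg, hf, qPochAlpha, qFactAlpha]
  have hstep : ∀ n : ℕ, g (n + 1) = z / q * f z n := by
    intro n
    have hPn := (hP_pos q α hq0 hq1 hα n).ne'
    have hDpos : 0 < 1 - q ^ (n + 1) * muAux q α (n + 1) :=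
      lt_of_lt_of_le (hm_pos q α hq0 hq1 hα) (hD_ge q α hq0 hq1 hα (n + 1) (by omega))
    have hrec : qPochAlpha q α (n + 1)
        = qPochAlpha q α n * (1 - q ^ (n + 1) * muAux q α (n + 1)) := by
      rw [hPsucc, hD q α hq0 hq1]
    rcases Nat.even_or_odd (n + 1) with he | ho
    · have hmu : muAux q α (n + 1) = 1 := by simp [muAux, Nat.even_iff.mp he]
      have hneg : (-z) ^ (n + 1) = z ^ (n + 1) := he.neg_pow z
      simp only [hg, hf]
      rw [hrec, hmu, hneg, Nat.triangle_succ, pow_add, div_pow, mul_one]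
      rw [hmu, mul_one] at hDpos
      have h2 : (1 : ℝ) - q ^ (n + 1) ≠ 0 := hDpos.ne'
      field_simp
      ring
    · have hmu : muAux q α (n + 1) = q ^ (2 * α + 1) := by
        simp [muAux, Nat.odd_iff.mp ho]
      have hneg : (-z) ^ (n + 1) = -z ^ (n + 1) := ho.neg_pow z
      simp only [hg, hf]
      rw [hrec, hmu, hneg, Nat.triangle_succ, pow_add, div_pow]
      rw [hmu] at hDpos
      have h2 : (1 : ℝ) - q ^ (n + 1) * q ^ (2 * α + 1) ≠ 0 := hDpos.ne'
      field_simp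
      ring
  have h2 := (hS z).mul_left (z / q)
  rw [show (fun n => z / q * f z n) = fun n => g (n + 1) from funext fun n => (hstep n).symm] at h2
  have h3 : HasSum g (z / q * bigEAlpha q α z + ∑ i ∈ Finset.range 1, g i) :=
    (hasSum_nat_add_iff 1).mp h2
  have h4 := h1.unique h3
  rwa [Finset.sum_range_one, hg0, add_zero] at h4


lemma logSummableAux (q C : ℝ) (hq0 : 0 < q) (hq1 : q < 1) (hC : 0 ≤ C) :
    Summable fun k : ℕ => Real.log (1 + C * q ^ (2 * k)) := by
  have h1 : ∀ k : ℕ, (0 : ℝ) < 1 + C * q ^ (2 * k) := fun k => by positivity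
  have hgeo : Summable fun k : ℕ => C * (q ^ 2) ^ k :=
    (summable_geometric_of_lt_one (by positivity) (by nlinarith)).mul_left C
  apply Summable.of_nonneg_of_le
    (fun k => Real.log_nonneg (le_add_of_nonneg_right (by positivity))) (fun k => ?_) hgeo
  calc Real.log (1 + C * q ^ (2 * k)) ≤ 1 + C * q ^ (2 * k) - 1 :=
        Real.log_le_sub_one_of_pos (h1 k)
    _ = C * (q ^ 2) ^ k := by rw [pow_mul]; ring

lemma expPi (q C : ℝ) (hq0 : 0 < q) (hq1 : q < 1) (hC : 0 ≤ C) :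
    Real.exp (∑' k : ℕ, Real.log (1 + C * q ^ (2 * k))) = ∏' k : ℕ, (1 + C * q ^ (2 * k)) := by
  have h1 : ∀ k : ℕ, (0 : ℝ) < 1 + C * q ^ (2 * k) := fun k => by positivity
  have h2 := Real.rexp_tsum_eq_tprod (f := fun k => 1 + C * q ^ (2 * k))
      h1 (logSummableAux q C hq0 hq1 hC)
  simpa only [Function.comp_apply] using h2

lemma prodShift (q C : ℝ) (hq0 : 0 < q) (hq1 : q < 1) (hC : 0 ≤ C) :
    (∏' k : ℕ, (1 + C * q ^ (2 * k))) =
      (1 + C) * ∏' k : ℕ, (1 + C * q ^ 2 * q ^ (2 * k)) := by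
  have hCq : 0 ≤ C * q ^ 2 := by positivity
  have h1 : (0 : ℝ) < 1 + C := by linarith
  have hfun : (fun k : ℕ => Real.log (1 + C * q ^ (2 * (k + 1))))
      = fun k : ℕ => Real.log (1 + C * q ^ 2 * q ^ (2 * k)) := by
    funext k; rw [show 2 * (k + 1) = 2 + 2 * k by ring, pow_add]; ring_nf
  have hshift : (∑' k : ℕ, Real.log (1 + C * q ^ (2 * k)))
      = Real.log (1 + C) + ∑' k : ℕ, Real.log (1 + C * q ^ 2 * q ^ (2 * k)) := by
    rw [Summable.tsum_eq_zero_add (logSummableAux q C hq0 hq1 hC)]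
    congr 1
    · norm_num
    · rw [← hfun]
  rw [← expPi q C hq0 hq1 hC, ← expPi q (C * q ^ 2) hq0 hq1 hCq, hshift, Real.exp_add,
    Real.exp_log h1]

lemma piPos (q C : ℝ) (hq0 : 0 < q) (hq1 : q < 1) (hC : 0 ≤ C) :
    (0 : ℝ) < ∏' k : ℕ, (1 + C * q ^ (2 * k)) := by
  have h1 : ∀ k : ℕ, (0 : ℝ) < 1 + C * q ^ (2 * k) := fun k => by positivity
  have h2 := Real.rexp_tsum_eq_tprod (f := fun k => 1 + C * q ^ (2 * k))
      h1 (logSummableAux q C hq0 hq1 hC)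
  rw [← h2]
  exact Real.exp_pos _

/-- the q-coherent state is an eigenfunction of the annihilation operator. -/
theorem stmt_13 (q α : ℝ) (hq0 : 0 < q) (hq1 : q < 1) (hα : -1 < α)
    (ζ : ℝ) (hζ : q * (1 - q) * ζ ^ 2 < 1) (x : ℝ) (hx : x ≠ 0) :
    Real.sqrt q / (Real.sqrt (1 - q) * x) *
      (Real.sqrt (1 + q ^ (-(2 * α + 3)) * x ^ 2) * gCoh q α ζ (x / q) -
        (gCoh q α ζ x + gCoh q α ζ (-x)) / 2 -
        q ^ (2 * α + 1) * ((gCoh q α ζ x - gCoh q α ζ (-x)) / 2)) =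
    ζ * gCoh q α ζ x := by
  have hq1' : (0:ℝ) < 1 - q := by linarith
  have hqne : q ≠ 0 := ne_of_gt hq0
  have hA0 : (0:ℝ) ≤ q ^ (-(2*α+3)) * x ^ 2 := by positivity
  have hCC : q ^ (-(2*α+1)) * (x / q) ^ 2 = q ^ (-(2*α+3)) * x ^ 2 := by
    rw [div_pow, show (-(2*α+1)) = (-(2*α+3)) + ((2:ℕ):ℝ) by push_cast; ring,
      Real.rpow_add hq0, Real.rpow_natCast]
    field_simp
  have hCq : q ^ (-(2*α+3)) * x ^ 2 * q ^ 2 = q ^ (-(2*α+1)) * x ^ 2 := by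
    rw [show (-(2*α+1)) = (-(2*α+3)) + ((2:ℕ):ℝ) by push_cast; ring,
      Real.rpow_add hq0, Real.rpow_natCast]
    ring
  have hfun1 : (fun k : ℕ => 1 + q ^ (-(2*α+1)) * (x/q) ^ 2 * q ^ (2*k))
      = fun k : ℕ => 1 + (q ^ (-(2*α+3)) * x ^ 2) * q ^ (2*k) := by
    funext k; rw [hCC]
  have hprod : (∏' k : ℕ, (1 + q ^ (-(2*α+1)) * (x/q) ^ 2 * q ^ (2*k)))
      = (1 + q ^ (-(2*α+3)) * x ^ 2) * ∏' k : ℕ, (1 + q ^ (-(2*α+1)) * x ^ 2 * q ^ (2*k)) := by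
    rw [hfun1, prodShift q _ hq0 hq1 hA0]
    congr 1
    exact tprod_congr fun k => by rw [hCq]
  have hPi : (0:ℝ) < ∏' k : ℕ, (1 + q ^ (-(2*α+1)) * x ^ 2 * q ^ (2*k)) :=
    piPos q _ hq0 hq1 (by positivity)
  have h1A : (0:ℝ) < 1 + q ^ (-(2*α+3)) * x ^ 2 := by linarith
  have homega : Real.sqrt (1 + q ^ (-(2*α+3)) * x ^ 2) * Real.sqrt (omegaAlpha q α (x/q))
      = Real.sqrt (omegaAlpha q α x) := by
    unfold omegaAlpha
    rw [hprod, ← Real.sqrt_mul h1A.le, mul_inv, ← mul_assoc,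
      mul_inv_cancel₀ (ne_of_gt h1A), one_mul]
  have heven : omegaAlpha q α (-x) = omegaAlpha q α x := by
    unfold omegaAlpha; rw [neg_sq]
  have harg1 : Real.sqrt q * Real.sqrt (1-q) * (x/q) * ζ
      = (Real.sqrt q * Real.sqrt (1-q) * x * ζ) / q := by ring
  have harg2 : Real.sqrt q * Real.sqrt (1-q) * (-x) * ζ
      = -(Real.sqrt q * Real.sqrt (1-q) * x * ζ) := by ring
  set z := Real.sqrt q * Real.sqrt (1-q) * x * ζ with hz
  unfold gCoh
  rw [harg1, harg2, heven]
  set W := Real.sqrt (omegaAlpha q α x) with hW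
  have hkey := keyE q α hq0 hq1 hα z
  have hbr : Real.sqrt (1 + q ^ (-(2*α+3)) * x ^ 2) *
        (Real.sqrt (omegaAlpha q α (x/q)) * bigEAlpha q α (z/q)) -
      (W * bigEAlpha q α z + W * bigEAlpha q α (-z)) / 2 -
      q ^ (2*α+1) * ((W * bigEAlpha q α z - W * bigEAlpha q α (-z)) / 2)
      = W * (z / q * bigEAlpha q α z) := by
    rw [← mul_assoc, homega, ← hkey]; ring
  rw [hbr]
  have hs1q : Real.sqrt (1-q) ≠ 0 := ne_of_gt (Real.sqrt_pos.mpr hq1')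
  have hsqq : Real.sqrt q * Real.sqrt q = q := Real.mul_self_sqrt hq0.le
  have hscal : Real.sqrt q / (Real.sqrt (1-q) * x) * (z / q) = ζ := by
    rw [hz]
    field_simp
    linear_combination ζ * hsqq
  calc Real.sqrt q / (Real.sqrt (1-q) * x) * (W * (z/q * bigEAlpha q α z))
      = (Real.sqrt q / (Real.sqrt (1-q) * x) * (z/q)) * (W * bigEAlpha q α z) := by ring
    _ = ζ * (W * bigEAlpha q α z) := by rw [hscal]
end
end

section
/- For every nonnegative integer n, real α>−1 and real x, lim_{q→1⁻} h̃_{n,α}(√(1−q²)·x ; q) / (1−q²)^{n/2} = H_n^{α+1/2}(x) / 2^n. -/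
open scoped BigOperators
open Real Filter

noncomputable section

/-! ### Auxiliary machinery for stmt_14 -/

/-- product of partial geometric sums -/
def gprod (q : ℝ) (n : ℕ) : ℝ := ∏ j ∈ Finset.range n, ∑ i ∈ Finset.range (j+1), q ^ i

/-- limit of `qNumAlpha` as `q → 1⁻` -/
def aLim (α : ℝ) (j : ℕ) : ℝ := if j % 2 = 0 then (j : ℝ) else (j : ℝ) + 2 * α + 1

/-- limit of `qFactAlpha` as `q → 1⁻` -/
def aProd (α : ℝ) (m : ℕ) : ℝ := ∏ j ∈ Finset.range m, aLim α (j + 1)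

lemma one_sub_pow (q : ℝ) (m : ℕ) :
    1 - q ^ m = (1 - q) * ∑ i ∈ Finset.range m, q ^ i := by
  linear_combination geom_sum_mul q m

lemma qPoch_factor (q : ℝ) (n : ℕ) : qPoch q q n = (1 - q) ^ n * gprod q n := by
  unfold qPoch gprod
  rw [show ((1:ℝ) - q) ^ n = ∏ _k ∈ Finset.range n, (1 - q) from by
    rw [Finset.prod_const, Finset.card_range], ← Finset.prod_mul_distrib]
  refine Finset.prod_congr rfl fun j _ => ?_
  rw [← one_sub_pow, ← pow_succ']

lemma gprod_one (n : ℕ) : gprod 1 n = (n.factorial : ℝ) := by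
  unfold gprod
  simp only [one_pow, Finset.sum_const, Finset.card_range, nsmul_eq_mul, mul_one]
  exact_mod_cast Finset.prod_range_add_one_eq_factorial n

lemma gprod_pos {q : ℝ} (hq : 0 < q) (n : ℕ) : 0 < gprod q n :=
  Finset.prod_pos fun j _ => Finset.sum_pos (fun i _ => pow_pos hq i) Finset.nonempty_range_add_one

lemma tendsto_ratio (r : ℝ) :
    Tendsto (fun q : ℝ => (1 - q ^ r) / (1 - q)) (nhdsWithin 1 (Set.Ioo 0 1)) (nhds r) := by
  have h : HasDerivAt (fun x : ℝ => x ^ r) r 1 := by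
    simpa using Real.hasDerivAt_rpow_const (x := 1) (p := r) (Or.inl one_ne_zero)
  have h2 := hasDerivAt_iff_tendsto_slope.mp h
  have h3 : Tendsto (slope (fun x : ℝ => x ^ r) 1) (nhdsWithin 1 (Set.Ioo 0 1)) (nhds r) :=
    h2.mono_left (nhdsWithin_mono _ fun y hy => ne_of_lt hy.2)
  refine h3.congr fun q => ?_
  rw [slope_def_field, show q ^ r - 1 ^ r = -(1 - q ^ r) by rw [Real.one_rpow]; ring,
    show q - 1 = -(1 - q) by ring, neg_div_neg_eq]

lemma tendsto_qNumAlpha (α : ℝ) (j : ℕ) :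
    Tendsto (fun q : ℝ => qNumAlpha q α j) (nhdsWithin 1 (Set.Ioo 0 1)) (nhds (aLim α j)) := by
  by_cases h : j % 2 = 0 <;> simp only [qNumAlpha, aLim, qNumber, h, if_true, if_false] <;>
    [exact tendsto_ratio (j : ℝ); exact tendsto_ratio ((j : ℝ) + 2 * α + 1)]

lemma tendsto_qFactAlpha (α : ℝ) (m : ℕ) :
    Tendsto (fun q : ℝ => qFactAlpha q α m) (nhdsWithin 1 (Set.Ioo 0 1)) (nhds (aProd α m)) :=
  tendsto_finset_prod _ fun j _ => tendsto_qNumAlpha α (j + 1)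

lemma qNumAlpha_pos_s14 {q α : ℝ} (hα : -1 < α) (hq : q ∈ Set.Ioo (0:ℝ) 1) (j : ℕ) :
    0 < qNumAlpha q α (j + 1) := by
  have h0 := hq.1; have h1 := hq.2
  have hj : (0:ℝ) ≤ (j:ℝ) := Nat.cast_nonneg j
  unfold qNumAlpha qNumber
  split_ifs with h
  · refine div_pos ?_ (by linarith)
    have : q ^ ((j+1 : ℕ):ℝ) < 1 := Real.rpow_lt_one h0.le h1 (by positivity)
    linarith
  · refine div_pos ?_ (by linarith)
    have : q ^ (((j+1 : ℕ):ℝ) + 2*α + 1) < 1 :=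
      Real.rpow_lt_one h0.le h1 (by push_cast; linarith)
    linarith

lemma aLim_pos {α : ℝ} (hα : -1 < α) (j : ℕ) : 0 < aLim α (j + 1) := by
  have hj : (0:ℝ) ≤ (j:ℝ) := Nat.cast_nonneg j
  unfold aLim; split_ifs with h <;> push_cast <;> linarith

lemma qFactAlpha_pos {q α : ℝ} (hα : -1 < α) (hq : q ∈ Set.Ioo (0:ℝ) 1) (m : ℕ) :
    0 < qFactAlpha q α m := Finset.prod_pos fun j _ => qNumAlpha_pos_s14 hα hq j

lemma aProd_pos {α : ℝ} (hα : -1 < α) (m : ℕ) : 0 < aProd α m :=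
  Finset.prod_pos fun j _ => aLim_pos hα j

lemma gamma_ratio {α : ℝ} (hα : -1 < α) (p : ℕ) :
    Real.Gamma (α + 1 + p) = Real.Gamma (α + 1) * ∏ i ∈ Finset.range p, (α + 1 + i) := by
  induction p with
  | zero => simp
  | succ p ih =>
    have hpos : (0:ℝ) < α + 1 + p := by have := Nat.cast_nonneg (α := ℝ) p; linarith
    have h : Real.Gamma (α + 1 + (p+1 : ℕ)) = (α + 1 + p) * Real.Gamma (α + 1 + p) := by
      rw [show (α + 1 + ((p+1:ℕ):ℝ)) = (α + 1 + p) + 1 by push_cast; ring]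
      exact Real.Gamma_add_one hpos.ne'
    rw [h, ih, Finset.prod_range_succ]; ring

lemma aProd_formula (α : ℝ) (m : ℕ) :
    aProd α m = 2 ^ m * ((m / 2).factorial : ℝ) * ∏ i ∈ Finset.range ((m + 1) / 2), (α + 1 + i) := by
  induction m with
  | zero => simp [aProd]
  | succ m ih =>
    rw [aProd, Finset.prod_range_succ, ← aProd, ih]
    rcases Nat.even_or_odd m with ⟨t, ht⟩ | ⟨t, ht⟩
    · have ht' : m = 2 * t := by omega
      subst ht'
      have e2 : (2*t) / 2 = t := by omega
      have e3 : (2*t+1) / 2 = t := by omega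
      have e4 : (2*t+1+1) / 2 = t + 1 := by omega
      have e5 : (2*t+1) % 2 ≠ 0 := by omega
      rw [aLim, if_neg e5, e2, e3, e4, Finset.prod_range_succ]
      push_cast; ring
    · subst ht
      have e1 : (2*t+1+1) % 2 = 0 := by omega
      have e2 : (2*t+1) / 2 = t := by omega
      have e3 : (2*t+1+1) / 2 = t+1 := by omega
      have e4 : (2*t+1+1+1) / 2 = t+1 := by omega
      rw [aLim, if_pos e1, e2, e3, e4, Nat.factorial_succ]
      push_cast; ring

lemma gammaGen_eq {α : ℝ} (hα : -1 < α) (m : ℕ) : gammaGen (α + 1/2) m = aProd α m := by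
  unfold gammaGen
  rw [show α + 1/2 + (((m+1)/2 : ℕ) : ℝ) + 1/2 = α + 1 + ((m+1)/2 : ℕ) by ring,
    gamma_ratio hα, aProd_formula]
  have hg : Real.Gamma (α + 1/2 + 1/2) ≠ 0 := by
    rw [show α + 1/2 + 1/2 = α + 1 by ring]
    exact (Real.Gamma_pos_of_pos (by linarith)).ne'
  rw [show α + 1/2 + 1/2 = α + 1 by ring] at hg ⊢
  field_simp

lemma hgen_sum {α : ℝ} (hα : -1 < α) (n : ℕ) (x : ℝ) :
    HGen (α + 1/2) n x / 2 ^ n = ∑ k ∈ Finset.range (n / 2 + 1),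
      ((-1:ℝ) ^ k * 1 * x ^ (n - 2*k) * (n.factorial : ℝ)) /
        ((2:ℝ) ^ (2*k) * (k.factorial : ℝ) * aProd α (n - 2*k)) := by
  unfold HGen
  rw [Finset.mul_sum, Finset.sum_div]
  refine Finset.sum_congr rfl fun k hk => ?_
  have hk2 : 2 * k ≤ n := by
    have := Finset.mem_range.mp hk; omega
  rw [gammaGen_eq hα]
  have h2 : (2:ℝ) ^ n = 2 ^ (n - 2*k) * 2 ^ (2*k) := by
    rw [← pow_add]; congr 1; omega
  have hA : aProd α (n - 2*k) ≠ 0 := (aProd_pos hα _).ne'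
  have hkf : (k.factorial : ℝ) ≠ 0 := by positivity
  rw [mul_pow, h2]
  field_simp

lemma key_eq (α x : ℝ) (hα : -1 < α) (n : ℕ) {q : ℝ} (hq : q ∈ Set.Ioo (0:ℝ) 1) :
    hTilde q α n (Real.sqrt (1 - q ^ 2) * x) / (1 - q ^ 2) ^ ((n : ℝ) / 2) =
      ∑ k ∈ Finset.range (n / 2 + 1),
        ((-1:ℝ) ^ k * q ^ ((k * (2 * k + 1) : ℤ) - (2 * n * k : ℤ)) * x ^ (n - 2*k) * gprod q n) /
          ((1 + q) ^ (2*k) * gprod (q ^ 2) k * qFactAlpha q α (n - 2*k)) := by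
  obtain ⟨h0, h1⟩ := hq
  have hu : (0:ℝ) < 1 - q := by linarith
  have hv : (0:ℝ) < 1 + q := by linarith
  have hw : (0:ℝ) < 1 - q ^ 2 := by nlinarith
  unfold hTilde
  rw [Finset.mul_sum, Finset.sum_div]
  refine Finset.sum_congr rfl fun k hk => ?_
  have hk2 : 2 * k ≤ n := by
    have := Finset.mem_range.mp hk; omega
  set m := n - 2 * k with hm
  have hnm : n = m + 2 * k := by omega
  have hs : (Real.sqrt (1 - q ^ 2) * x) ^ m = (1 - q^2) ^ ((m:ℝ)/2) * x ^ m := by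
    rw [mul_pow]; congr 1
    rw [Real.sqrt_eq_rpow, ← Real.rpow_natCast ((1 - q^2) ^ ((1:ℝ)/2 : ℝ)) m,
      ← Real.rpow_mul hw.le]
    congr 1; ring
  have hsplit : (1 - q^2) ^ ((n:ℝ)/2) = (1 - q^2) ^ ((m:ℝ)/2) * (1 - q^2) ^ (k:ℕ) := by
    rw [← Real.rpow_natCast (1 - q^2) k, ← Real.rpow_add hw]
    congr 1
    rw [hnm]; push_cast; ring
  rw [qPoch_factor q n, qPoch_factor (q^2) k, hs, hsplit,
    show qPochAlpha q α m = (1-q)^m * qFactAlpha q α m from rfl]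
  have hA : ((1 - q^2) ^ ((m:ℝ)/2) : ℝ) ≠ 0 := (Real.rpow_pos_of_pos hw _).ne'
  have hP : gprod (q^2) k ≠ 0 := (gprod_pos (by positivity) k).ne'
  have hR : qFactAlpha q α m ≠ 0 := (qFactAlpha_pos hα ⟨h0,h1⟩ m).ne'
  have hq2 : (1:ℝ) - q^2 ≠ 0 := hw.ne'
  rw [hnm]
  field_simp
  rw [show ((1:ℝ) - q^2)^(k:ℕ) = (1-q)^(k:ℕ) * (1+q)^(k:ℕ) from by
    rw [← mul_pow]; congr 1; ring]
  ring

/-- limit of the generalized discrete q-Hermite II polynomials to the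
generalized Hermite polynomials. -/
theorem stmt_14 (α : ℝ) (hα : -1 < α) (n : ℕ) (x : ℝ) :
    Tendsto (fun q : ℝ =>
        hTilde q α n (Real.sqrt (1 - q ^ 2) * x) / (1 - q ^ 2) ^ ((n : ℝ) / 2))
      (nhdsWithin 1 (Set.Ioo 0 1))
      (nhds (HGen (α + 1 / 2) n x / 2 ^ n)) := by
  have hPn : Tendsto (fun q : ℝ => gprod q n) (nhdsWithin 1 (Set.Ioo 0 1))
      (nhds (n.factorial : ℝ)) := by
    have hc : Continuous fun q : ℝ => gprod q n := by
      unfold gprod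
      exact continuous_finset_prod _ fun j _ => continuous_finset_sum _ fun i _ => continuous_pow i
    have h := (hc.tendsto 1).mono_left (nhdsWithin_le_nhds (s := Set.Ioo (0:ℝ) 1))
    rwa [gprod_one] at h
  have hQ : ∀ k : ℕ, Tendsto (fun q : ℝ => gprod (q^2) k) (nhdsWithin 1 (Set.Ioo 0 1))
      (nhds (k.factorial : ℝ)) := by
    intro k
    have hc0 : Continuous fun y : ℝ => gprod y k := by
      unfold gprod
      exact continuous_finset_prod _ fun j _ => continuous_finset_sum _ fun i _ => continuous_pow i
    have hc : Continuous fun q : ℝ => gprod (q^2) k := hc0.comp (continuous_pow 2)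
    have h := (hc.tendsto 1).mono_left (nhdsWithin_le_nhds (s := Set.Ioo (0:ℝ) 1))
    simp only [one_pow] at h
    rwa [gprod_one] at h
  have hz : ∀ k : ℕ, Tendsto (fun q : ℝ => q ^ ((k * (2 * k + 1) : ℤ) - (2 * n * k : ℤ)))
      (nhdsWithin 1 (Set.Ioo 0 1)) (nhds 1) := by
    intro k
    have h := ((continuousAt_zpow₀ (1:ℝ) ((k * (2 * k + 1) : ℤ) - (2 * n * k : ℤ))
      (Or.inl one_ne_zero)).tendsto).mono_left (nhdsWithin_le_nhds (s := Set.Ioo (0:ℝ) 1))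
    simpa using h
  have hden : ∀ k : ℕ, Tendsto (fun q : ℝ => (1+q)^(2*k)) (nhdsWithin 1 (Set.Ioo 0 1))
      (nhds ((2:ℝ)^(2*k))) := by
    intro k
    have hc : Continuous fun q : ℝ => (1+q)^(2*k) := by continuity
    have h := (hc.tendsto 1).mono_left (nhdsWithin_le_nhds (s := Set.Ioo (0:ℝ) 1))
    rwa [show ((1:ℝ)+1)^(2*k) = 2^(2*k) from by norm_num] at h
  have hterm : ∀ k ∈ Finset.range (n / 2 + 1),
      Tendsto (fun q : ℝ =>
        ((-1:ℝ) ^ k * q ^ ((k * (2 * k + 1) : ℤ) - (2 * n * k : ℤ)) * x ^ (n - 2*k) * gprod q n) /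
          ((1 + q) ^ (2*k) * gprod (q ^ 2) k * qFactAlpha q α (n - 2*k)))
        (nhdsWithin 1 (Set.Ioo 0 1))
        (nhds (((-1:ℝ) ^ k * 1 * x ^ (n - 2*k) * (n.factorial : ℝ)) /
          ((2:ℝ) ^ (2*k) * (k.factorial : ℝ) * aProd α (n - 2*k)))) := by
    intro k _
    have hne : (2:ℝ) ^ (2*k) * (k.factorial : ℝ) * aProd α (n - 2*k) ≠ 0 := by
      have h1 : (0:ℝ) < (2:ℝ) ^ (2*k) := by positivity
      have h2 : (0:ℝ) < (k.factorial : ℝ) := by positivity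
      exact (mul_pos (mul_pos h1 h2) (aProd_pos hα _)).ne'
    exact (((tendsto_const_nhds.mul (hz k)).mul tendsto_const_nhds).mul hPn).div
      (((hden k).mul (hQ k)).mul (tendsto_qFactAlpha α (n - 2*k))) hne
  have hsum := tendsto_finset_sum (Finset.range (n / 2 + 1)) hterm
  rw [hgen_sum hα n x]
  refine hsum.congr' ?_
  filter_upwards [self_mem_nhdsWithin] with q hq
  exact (key_eq α x hα n hq).symm
end
end
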